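/- arXiv:1612.03607 — 4 statements merged into one kernel-verified Lean document; each statement's English description precedes it below -/
import Mathlib

section
/- Let H = (V,A) be a digraph containing an out-branching rooted at s ∈ V. Then every out-tree rooted at s that is a subdigraph of H with q leaves can be extended into an out-branching of H rooted at s with at least q leaves. -/
namespace CutPaper

variable {V : Type*}

/-- A directed path in the digraph `A`, given as a nonempty list of distinct
vertices from `u` to `v` with consecutive vertices joined by arcs. -/
def IsPath (A : V → V → Prop) (p : List V) (u v : V) : Prop :=
  p.Chain' A ∧ p.head? = some u ∧ p.getLast? = some v ∧ p.Nodup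

/-- `v` is reachable from `u` in the digraph `A`. -/
def Reaches (A : V → V → Prop) (u v : V) : Prop := ∃ p, IsPath A p u v

/-- Two paths from `r` to `v` are internally disjoint: they share only `r` and `v`. -/
def IntDisj (p q : List V) (r v : V) : Prop :=
  ∀ x, x ∈ p → x ∈ q → x = r ∨ x = v

/-- `v` is bi-reachable from `r`: there are two (distinct) internally
vertex-disjoint paths from `r` to `v`. -/
def BiReachable (A : V → V → Prop) (r v : V) : Prop :=
  ∃ p q, p ≠ q ∧ IsPath A p r v ∧ IsPath A q r v ∧ IntDisj p q r v

/-- The diblock of `r`: bi-reachable vertices together with `r` and its out-neighbours. -/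
def diblock (A : V → V → Prop) (r : V) : Set V :=
  {v | BiReachable A r v} ∪ {r} ∪ {v | A r v}

/-- The subdigraph of `A` induced on a vertex set `S`. -/
def Asub (A : V → V → Prop) (S : Set V) : V → V → Prop :=
  fun u v => A u v ∧ u ∈ S ∧ v ∈ S

/-- The path `p` meets the set `B` for the last time in `x`. -/
def LastTouch (B : Set V) (p : List V) (x : V) : Prop :=
  ∃ p₁ p₂, p = p₁ ++ x :: p₂ ∧ x ∈ B ∧ ∀ y ∈ p₂, y ∉ B

/-- `T` is an out-tree with vertex set `S` and root `r`, as a subdigraph of `A`. -/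
structure IsOutTree (A T : V → V → Prop) (S : Set V) (r : V) : Prop where
  sub : ∀ u v, T u v → A u v
  mem : ∀ u v, T u v → u ∈ S ∧ v ∈ S
  root_mem : r ∈ S
  no_in_root : ∀ u, ¬ T u r
  unique_in : ∀ v ∈ S, v ≠ r → ∃! u, T u v
  reach : ∀ v ∈ S, Reaches T r v

/-- `T` is an in-tree with vertex set `S` and root `r`, as a subdigraph of `A`. -/
def IsInTree (A T : V → V → Prop) (S : Set V) (r : V) : Prop :=
  IsOutTree (fun u v => A v u) (fun u v => T v u) S r

/-- The leaves (vertices of out-degree zero) of an out-tree `T` on vertex set `S`. -/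
def leaves (T : V → V → Prop) (S : Set V) : Set V :=
  {v | v ∈ S ∧ ∀ u, ¬ T v u}

/-- The leaves (vertices of in-degree zero) of an in-tree `T` on vertex set `S`. -/
def inLeaves (T : V → V → Prop) (S : Set V) : Set V :=
  {v | v ∈ S ∧ ∀ u, ¬ T u v}

/-- The raw data of a rooted cut decomposition: a node set, a parent map,
and an assignment of diblocks to nodes. -/
structure PreDecomp (V : Type*) where
  N : Set V
  parent : V → V
  B : V → Set V

/-- One step up the decomposition tree rooted at `r`. -/
def Step (d : PreDecomp V) (r : V) (a b : V) : Prop :=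
  a ∈ d.N ∧ a ≠ r ∧ d.parent a = b

/-- `x` is an ancestor (not necessarily proper) of `y` in the decomposition tree. -/
def Anc (d : PreDecomp V) (r : V) (x y : V) : Prop :=
  Relation.ReflTransGen (Step d r) y x

/-- `y` is a child of `x` in the decomposition tree. -/
def IsChild (d : PreDecomp V) (r : V) (y x : V) : Prop :=
  y ∈ d.N ∧ y ≠ r ∧ d.parent y = x

/-- `B*_x`: the union of the diblocks over the subtree rooted at `x`. -/
def Bstar (d : PreDecomp V) (r : V) (x : V) : Set V :=
  {v | ∃ y ∈ d.N, Anc d r x y ∧ v ∈ d.B y}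

/-- The partition class `X_y` of a bottleneck `y` of the diblock of `x`
inside `B*_x`: the vertices below `B x` whose access paths from `x`
leave `B x` for the last time at `y`. -/
def PartClass (A : V → V → Prop) (d : PreDecomp V) (r x y : V) : Set V :=
  {v | v ∈ Bstar d r x ∧ v ∉ d.B x ∧
    ∀ p, IsPath (Asub A (Bstar d r x)) p x v → LastTouch (d.B x) p y}

/-- `d` is the `r`-rooted cut decomposition of the digraph `A`:
the tree is well-founded towards the root `r`, the diblocks cover all vertices,
each `B x` is the diblock of `x` in the subdigraph induced on `B*_x`,
the children of `x` are exactly the bottlenecks of `B x`, and the subtree of a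
child `y` spans exactly `{y}` together with the partition class of `y`. -/
structure IsCutDecomp (A : V → V → Prop) (r : V) (d : PreDecomp V) : Prop where
  root_mem : r ∈ d.N
  parent_mem : ∀ x ∈ d.N, x ≠ r → d.parent x ∈ d.N
  tree : ∀ x ∈ d.N, Anc d r r x
  cover : Bstar d r r = Set.univ
  diblock_eq : ∀ x ∈ d.N, d.B x = diblock (Asub A (Bstar d r x)) x
  child_iff : ∀ x ∈ d.N, ∀ y,
    IsChild d r y x ↔ (y ∈ d.B x ∧ y ≠ x ∧ (PartClass A d r x y).Nonempty)
  child_part : ∀ x ∈ d.N, ∀ y, IsChild d r y x →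
    Bstar d r y = insert y (PartClass A d r x y)


lemma isPath_mono {A B : V → V → Prop} (h : ∀ u v, A u v → B u v)
    {p : List V} {u v : V} (hp : IsPath A p u v) : IsPath B p u v :=
  ⟨hp.1.imp (fun {a b} => h a b), hp.2.1, hp.2.2.1, hp.2.2.2⟩

lemma reaches_mono {A B : V → V → Prop} (h : ∀ u v, A u v → B u v)
    {u v : V} (hp : Reaches A u v) : Reaches B u v :=
  ⟨hp.choose, isPath_mono h hp.choose_spec⟩

lemma reaches_refl (A : V → V → Prop) (u : V) : Reaches A u u :=
  ⟨[u], by simp [IsPath, List.Chain']⟩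

lemma reaches_of_arc {A : V → V → Prop} {s u v : V}
    (h : Reaches A s u) (ha : A u v) : Reaches A s v := by
  obtain ⟨p, hc, hh, hl, hn⟩ := h
  by_cases hv : v ∈ p
  · obtain ⟨p₁, p₂, rfl⟩ := List.append_of_mem hv
    refine ⟨p₁ ++ [v], ?_, ?_, ?_, ?_⟩
    · exact hc.prefix ⟨p₂, by simp⟩
    · rw [← hh]; cases p₁ <;> rfl
    · exact List.getLast?_concat
    · exact hn.sublist (by simpa using (List.sublist_append_right p₁ (v :: p₂)).cons₂ v |>.append_left p₁)
  · refine ⟨p ++ [v], ?_, ?_, List.getLast?_concat, ?_⟩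
    · rw [List.Chain', List.isChain_append]
      refine ⟨hc, List.isChain_singleton v, ?_⟩
      intro x hx y hy
      simp only [List.head?_cons, Option.mem_def, Option.some.injEq] at hy
      rw [hl] at hx
      simp only [Option.mem_def, Option.some.injEq] at hx
      subst hx; subst hy; exact ha
    · have : p ≠ [] := by rintro rfl; simp at hh
      rw [List.head?_append_of_ne_nil _ this]; exact hh
    · rw [List.nodup_append]
      exact ⟨hn, List.nodup_singleton v, by intro a hap b hb; simp at hb; subst hb; rintro rfl; exact hv hap⟩

lemma isPath_last {A : V → V → Prop} {p : List V} {s v : V}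
    (hp : IsPath A p s v) (hvs : v ≠ s) :
    ∃ p₀ u, p = p₀ ++ [v] ∧ IsPath A p₀ s u ∧ A u v := by
  obtain ⟨hc, hh, hl, hn⟩ := hp
  rcases List.eq_nil_or_concat p with rfl | ⟨p₀, a, rfl⟩
  · simp at hh
  · rw [List.concat_eq_append] at *
    rw [List.getLast?_concat] at hl
    obtain rfl : a = v := by simpa using hl
    have hp₀ : p₀ ≠ [] := by
      rintro rfl
      simp at hh
      exact hvs hh
    refine ⟨p₀, p₀.getLast hp₀, rfl, ⟨?_, ?_, ?_, ?_⟩, ?_⟩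
    · exact hc.prefix ⟨[a], rfl⟩
    · rwa [List.head?_append_of_ne_nil _ hp₀] at hh
    · exact List.getLast?_eq_getLast hp₀ ▸ rfl
    · exact hn.sublist (List.sublist_append_left _ _)
    · have := (List.isChain_append.mp hc).2.2
      exact this _ (by rw [List.getLast?_eq_getLast hp₀]; rfl) a rfl

lemma reach_along {A T' : V → V → Prop} {S : Set V} {s : V}
    (hS : ∀ v ∈ S, Reaches T' s v)
    (harc : ∀ u v, v ∉ S → A u v → T' u v) :
    ∀ (p : List V) (u v : V), IsPath A p u v → Reaches T' s u → Reaches T' s v := by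
  intro p
  induction p with
  | nil => intro u v hp; exact absurd hp.2.1 (by simp)
  | cons a t ih =>
    intro u v hp hu
    obtain ⟨hc, hh, hl, hn⟩ := hp
    obtain rfl : a = u := by simpa using hh
    cases t with
    | nil =>
      obtain rfl : a = v := by simpa using hl
      exact hu
    | cons b t =>
      have hab : A a b := (List.isChain_cons_cons.mp hc).1
      have hb : Reaches T' s b := by
        by_cases hbS : b ∈ S
        · exact hS b hbS
        · exact reaches_of_arc hu (harc a b hbS hab)
      exact ih b v ⟨(List.isChain_cons_cons.mp hc).2, rfl, by simpa using hl, hn.of_cons⟩ hb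


/-- any rooted out-tree with `q` leaves extends to a rooted
out-branching with at least `q` leaves. -/
theorem outTree_extension {V : Type*} [Fintype V]
    (A T Tb : V → V → Prop) (s : V) (q : ℕ) (S : Set V)
    (hTb : IsOutTree A Tb Set.univ s)
    (hT : IsOutTree A T S s)
    (hq : q ≤ (leaves T S).ncard) :
    ∃ T' : V → V → Prop, IsOutTree A T' Set.univ s ∧
      (∀ u v, T u v → T' u v) ∧ q ≤ (leaves T' Set.univ).ncard := by
  classical
  set T' : V → V → Prop := fun u v => T u v ∨ (v ∉ S ∧ Tb u v) with hT'def
  have hTsub : ∀ u v, T u v → T' u v := fun u v h => Or.inl h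
  have hsS : s ∈ S := hT.root_mem
  have huniq : ∀ v, v ≠ s → ∃! u, T' u v := by
    intro v hv
    by_cases hvS : v ∈ S
    · obtain ⟨u, hu, hu'⟩ := hT.unique_in v hvS hv
      refine ⟨u, Or.inl hu, fun w hw => ?_⟩
      rcases hw with h | h
      · exact hu' w h
      · exact absurd hvS h.1
    · obtain ⟨u, hu, hu'⟩ := hTb.unique_in v trivial hv
      refine ⟨u, Or.inr ⟨hvS, hu⟩, fun w hw => ?_⟩
      rcases hw with h | h
      · exact absurd (hT.mem _ _ h).2 hvS
      · exact hu' w h.2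
  have hnoroot : ∀ u, ¬ T' u s := by
    intro u h
    rcases h with h | h
    · exact hT.no_in_root u h
    · exact h.1 hsS
  have hreachS : ∀ v ∈ S, Reaches T' s v := fun v hv =>
    reaches_mono hTsub (hT.reach v hv)
  have hreach : ∀ v, Reaches T' s v := by
    intro v
    obtain ⟨p, hp⟩ := hTb.reach v trivial
    exact reach_along hreachS (fun u w hwS hA => Or.inr ⟨hwS, hA⟩) p s v hp
      (reaches_refl T' s)
  -- the rank function
  have hex : ∀ v : V, ∃ n, ∃ p, IsPath T' p s v ∧ p.length = n := fun v =>
    ⟨(hreach v).choose.length, (hreach v).choose, (hreach v).choose_spec, rfl⟩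
  set ρ : V → ℕ := fun v => Nat.find (hex v) with hρdef
  have hρ_spec : ∀ v, ∃ p, IsPath T' p s v ∧ p.length = ρ v := fun v => Nat.find_spec (hex v)
  have hρ_min : ∀ v (p : List V), IsPath T' p s v → ρ v ≤ p.length := fun v p hp =>
    Nat.find_le ⟨p, hp, rfl⟩
  have hρ_bound : ∀ v, ρ v ≤ Fintype.card V := by
    intro v
    obtain ⟨p, hp, hl⟩ := hρ_spec v
    rw [← hl]
    exact hp.2.2.2.length_le_card
  have hρ_lt : ∀ u v, T' u v → v ≠ s → ρ u + 1 ≤ ρ v := by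
    intro u v hav hvs
    obtain ⟨p, hp, hl⟩ := hρ_spec v
    obtain ⟨p₀, u₀, rfl, hp₀, ha₀⟩ := isPath_last hp hvs
    obtain rfl : u₀ = u := by
      obtain ⟨w, _, hw⟩ := huniq v hvs
      rw [hw u₀ ha₀, hw u hav]
    have := hρ_min u₀ p₀ hp₀
    simp only [List.length_append, List.length_singleton] at hl
    omega
  -- descent through vertices outside S
  set R' : V → V → Prop := fun a b => T' a b ∧ b ∉ S with hR'def
  have hdesc : ∀ n (v : V), v ∉ S → Fintype.card V ≤ ρ v + n →
      ∃ w, Relation.ReflTransGen R' v w ∧ ∀ z, ¬ T' w z := by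
    intro n
    induction n with
    | zero =>
      intro v hv hbd
      refine ⟨v, Relation.ReflTransGen.refl, fun z hz => ?_⟩
      have hzs : z ≠ s := by rintro rfl; exact hnoroot v hz
      have h1 := hρ_lt v z hz hzs
      have h2 := hρ_bound z
      omega
    | succ n ih =>
      intro v hv hbd
      by_cases hleaf : ∀ z, ¬ T' v z
      · exact ⟨v, Relation.ReflTransGen.refl, hleaf⟩
      · push_neg at hleaf
        obtain ⟨z, hz⟩ := hleaf
        have hzS : z ∉ S := by
          rcases hz with h | h
          · exact absurd (hT.mem _ _ h).1 hv
          · exact h.1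
        have hzs : z ≠ s := by rintro rfl; exact hzS hsS
        have h1 := hρ_lt v z hz hzs
        obtain ⟨w, hw, hwl⟩ := ih z hzS (by omega)
        exact ⟨w, Relation.ReflTransGen.head ⟨hz, hzS⟩ hw, hwl⟩
  have hkey : ∀ u ∈ leaves T S, ∃ w, Relation.ReflTransGen R' u w ∧ ∀ z, ¬ T' w z := by
    intro u hu
    by_cases hleaf : ∀ z, ¬ T' u z
    · exact ⟨u, Relation.ReflTransGen.refl, hleaf⟩
    · push_neg at hleaf
      obtain ⟨z, hz⟩ := hleaf
      have hzS : z ∉ S := by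
        rcases hz with h | h
        · exact absurd h (hu.2 z)
        · exact h.1
      obtain ⟨w, hw, hwl⟩ := hdesc (Fintype.card V) z hzS (by have := hρ_bound z; omega)
      exact ⟨w, Relation.ReflTransGen.head ⟨hz, hzS⟩ hw, hwl⟩
  have hLU : ∀ a a' b : V, R' a b → R' a' b → a = a' := by
    rintro a a' b ⟨h1, hb⟩ ⟨h2, -⟩
    have hbs : b ≠ s := by rintro rfl; exact hb hsS
    obtain ⟨w, -, hw⟩ := huniq b hbs
    rw [hw a h1, hw a' h2]
  have htot : ∀ {x w : V}, Relation.ReflTransGen R' x w → ∀ {y : V},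
      Relation.ReflTransGen R' y w →
      Relation.ReflTransGen R' x y ∨ Relation.ReflTransGen R' y x := by
    intro x w hxw
    induction hxw with
    | refl => intro y hy; exact Or.inr hy
    | @tail b c hxb hbc ih =>
      intro y hyc
      rcases hyc.cases_tail with rfl | ⟨b', hyb', hb'c⟩
      · exact Or.inl (hxb.tail hbc)
      · obtain rfl : b' = b := hLU b' b c hb'c hbc
        exact ih hyb'
  -- the injection into the leaves of T'
  set f : V → V := fun u =>
    if h : ∃ w, Relation.ReflTransGen R' u w ∧ ∀ z, ¬ T' w z then h.choose else u with hfdef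
  have hf : ∀ u ∈ leaves T S, Relation.ReflTransGen R' u (f u) ∧ ∀ z, ¬ T' (f u) z := by
    intro u hu
    have h := hkey u hu
    simp only [hfdef, dif_pos h]
    exact h.choose_spec
  have hmaps : ∀ u ∈ leaves T S, f u ∈ leaves T' Set.univ := fun u hu =>
    ⟨trivial, (hf u hu).2⟩
  have hnostep : ∀ u : V, u ∈ S → ∀ x, Relation.ReflTransGen R' x u → x = u := by
    intro u hu x hx
    rcases hx.cases_tail with rfl | ⟨b, -, hb⟩
    · rfl
    · exact absurd hu hb.2
  have hinj : Set.InjOn f (leaves T S) := by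
    intro u1 h1 u2 h2 heq
    have hf1 := hf u1 h1
    have hf2 := hf u2 h2
    rw [heq] at hf1
    rcases htot hf1.1 hf2.1 with h | h
    · exact (hnostep u2 h2.1 u1 h).symm ▸ rfl
    · exact (hnostep u1 h1.1 u2 h) ▸ rfl
  refine ⟨T', ⟨?_, fun u v _ => ⟨trivial, trivial⟩, trivial, hnoroot,
      fun v _ hv => huniq v hv, fun v _ => hreach v⟩, hTsub, ?_⟩
  · intro u v h
    rcases h with h | h
    · exact hT.sub u v h
    · exact hTb.sub u v h.2
  · exact hq.trans (Set.ncard_le_ncard_of_injOn f hmaps hinj (Set.toFinite _))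

end CutPaper
end

section
/- Let H be a digraph, r ∈ V(H) such that every vertex of H is reachable from r, and let B_r be the diblock of r in H. Then for every pair of distinct vertices x, y ∈ B_r, there exist a directed r-x-path P_x and a directed r-y-path P_y in H that intersect only in r. -/
namespace CutPaper

variable {V : Type*}

section Aux

variable {A : V → V → Prop} {r x y z u v : V} {p q P1 P2 Pi Pj Q p₁ p₂ q₁ q₂ s t : List V}

lemma IsPath.start_mem (h : IsPath A p u v) : u ∈ p :=
  List.mem_of_mem_head? (by rw [h.2.1]; rfl)

lemma isPath_singleton (u : V) : IsPath A [u] u u :=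
  ⟨List.isChain_singleton u, rfl, rfl, List.nodup_singleton u⟩

lemma isPath_pair (h : A u v) (huv : u ≠ v) : IsPath A [u, v] u v := by
  refine ⟨?_, rfl, rfl, ?_⟩ <;> simp [List.Chain', h, huv]

lemma isPath_self (h : IsPath A p r r) : p = [r] := by
  rcases p with _ | ⟨a, t⟩
  · simp [IsPath] at h
  · obtain ⟨_, hh, hl, hn⟩ := h
    simp at hh
    rcases t with _ | ⟨b, s⟩
    · rw [hh]
    · exfalso
      rw [List.getLast?_cons_cons] at hl
      have hm : r ∈ b :: s := List.mem_of_mem_getLast? (by rw [hl]; rfl)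
      rw [hh] at hn
      exact (List.nodup_cons.mp hn).1 hm

lemma biReachable_ne (h : BiReachable A r v) : v ≠ r := by
  rintro rfl
  obtain ⟨p, q, hpq, hp, hq, -⟩ := h
  exact hpq ((isPath_self hp).trans (isPath_self hq).symm)

lemma exists_lastTouch' (S : V → Prop) :
    ∀ (l : List V), (∃ a ∈ l, S a) →
    ∃ l₁ z l₂, l = l₁ ++ z :: l₂ ∧ S z ∧ ∀ w ∈ l₂, ¬ S w := by
  intro l
  induction l with
  | nil => rintro ⟨a, ha, -⟩; simp at ha
  | cons a t ih =>
    intro h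
    by_cases ht : ∃ b ∈ t, S b
    · obtain ⟨l₁, z, l₂, he, hz, hl₂⟩ := ih ht
      exact ⟨a :: l₁, z, l₂, by rw [he]; rfl, hz, hl₂⟩
    · obtain ⟨b, hb, hSb⟩ := h
      have hba : b = a := by
        rcases List.mem_cons.mp hb with h | h
        · exact h
        · exact absurd ⟨b, h, hSb⟩ ht
      exact ⟨[], a, t, rfl, hba ▸ hSb, fun w hw hSw => ht ⟨w, hw, hSw⟩⟩

lemma mem_of_mem_concat (h : v ∈ s ++ [z]) : v ∈ s ++ z :: t := by
  rcases List.mem_append.mp h with h | h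
  · exact List.mem_append.mpr (Or.inl h)
  · simp at h; subst h
    exact List.mem_append.mpr (Or.inr List.mem_cons_self)

lemma prefix_isPath (h : IsPath A (p₁ ++ z :: p₂) r v) : IsPath A (p₁ ++ [z]) r z := by
  obtain ⟨hc, hh, hl, hn⟩ := h
  have he : p₁ ++ z :: p₂ = (p₁ ++ [z]) ++ p₂ := by simp
  rw [he] at hc hn
  refine ⟨(List.isChain_append.mp hc).1, ?_, List.getLast?_concat,
    (List.nodup_append'.mp hn).1⟩
  rcases p₁ with _ | ⟨a, t⟩
  · simpa using hh
  · simpa using hh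

lemma not_mem_concat (hn : (p₁ ++ z :: p₂).Nodup) (hl : (p₁ ++ z :: p₂).getLast? = some x)
    (hzx : x ≠ z) : x ∉ p₁ ++ [z] := by
  intro hx
  have hx1 : x ∈ p₁ := by
    rcases List.mem_append.mp hx with h | h
    · exact h
    · simp at h; exact absurd h hzx
  have hx2 : x ∈ z :: p₂ := by
    rw [List.getLast?_append_of_ne_nil p₁ (by simp)] at hl
    exact List.mem_of_mem_getLast? (by rw [hl]; rfl)
  exact (List.nodup_append'.mp hn).2.2 hx1 hx2

lemma splice (hp : IsPath A p r z) (hc : (z :: q₂).Chain' A)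
    (hl : (z :: q₂).getLast? = some y) (hn : (z :: q₂).Nodup)
    (hd : ∀ w ∈ q₂, w ∉ p) : IsPath A (p ++ q₂) r y := by
  obtain ⟨hpc, hph, hpl, hpn⟩ := hp
  refine ⟨?_, ?_, ?_, ?_⟩
  · apply List.isChain_append.mpr
    refine ⟨hpc, (List.isChain_cons.mp hc).2, ?_⟩
    intro a ha b hb
    rw [hpl] at ha
    rw [Option.mem_some_iff] at ha
    subst ha
    exact (List.isChain_cons.mp hc).1 b hb
  · rcases p with _ | ⟨a, t⟩
    · simp at hph
    · simpa using hph
  · rcases q₂ with _ | ⟨b, s⟩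
    · simp only [List.append_nil]
      rw [hpl]
      simpa using hl
    · rw [List.getLast?_append_of_ne_nil p (by simp)]
      rwa [List.getLast?_cons_cons] at hl
  · exact List.nodup_append'.mpr ⟨hpn, hn.of_cons, fun a ha hb => hd a hb ha⟩

lemma helper1 (hPi : IsPath A Pi r x) (hPj : IsPath A Pj r x)
    (hdisj : ∀ w, w ∈ Pi → w ∈ Pj → w = r ∨ w = x)
    (hy : y ∈ Pi) (hyx : y ≠ x) :
    ∃ p q, IsPath A p r x ∧ IsPath A q r y ∧ ∀ w, w ∈ p → w ∈ q → w = r := by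
  obtain ⟨s, t, hst⟩ := List.append_of_mem hy
  have hpre : IsPath A (s ++ [y]) r y := prefix_isPath (hst ▸ hPi)
  have hxpre : x ∉ s ++ [y] :=
    not_mem_concat (hst ▸ hPi.2.2.2) (hst ▸ hPi.2.2.1) (Ne.symm hyx)
  refine ⟨Pj, s ++ [y], hPj, hpre, fun w hwp hwq => ?_⟩
  have hwi : w ∈ Pi := hst ▸ mem_of_mem_concat hwq
  rcases hdisj w hwi hwp with h | h
  · exact h
  · exact absurd (h ▸ hwq) hxpre

lemma helper2 (hPi : IsPath A Pi r x) (hPj : IsPath A Pj r x)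
    (hdisj : ∀ w, w ∈ Pi → w ∈ Pj → w = r ∨ w = x)
    (hQ : IsPath A (q₁ ++ z :: q₂) r y)
    (hz : z ∈ Pi) (hzx : z ≠ x)
    (hq₂i : ∀ w ∈ q₂, w ∉ Pi) (hq₂j : ∀ w ∈ q₂, w ∉ Pj)
    (hzy : z ≠ y) :
    ∃ p q, IsPath A p r x ∧ IsPath A q r y ∧ ∀ w, w ∈ p → w ∈ q → w = r := by
  obtain ⟨s, t, hst⟩ := List.append_of_mem hz
  have hpre : IsPath A (s ++ [z]) r z := prefix_isPath (hst ▸ hPi)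
  have hxpre : x ∉ s ++ [z] :=
    not_mem_concat (hst ▸ hPi.2.2.2) (hst ▸ hPi.2.2.1) (Ne.symm hzx)
  have hQc := hQ.1
  have hQn := hQ.2.2.2
  have hQl := hQ.2.2.1
  have hc : (z :: q₂).Chain' A := (List.isChain_append.mp hQc).2.1
  have hn : (z :: q₂).Nodup := (List.sublist_append_right q₁ _).nodup hQn
  have hq₂ne : q₂ ≠ [] := by
    rintro rfl
    rw [List.getLast?_append_of_ne_nil q₁ (by simp)] at hQl
    simp at hQl
    exact hzy hQl
  have hl : (z :: q₂).getLast? = some y := by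
    rw [List.getLast?_append_of_ne_nil q₁ (by simp)] at hQl
    exact hQl
  have hdpre : ∀ w ∈ q₂, w ∉ s ++ [z] := fun w hw hws =>
    hq₂i w hw (hst ▸ mem_of_mem_concat hws)
  have hq : IsPath A ((s ++ [z]) ++ q₂) r y := splice hpre hc hl hn hdpre
  refine ⟨Pj, (s ++ [z]) ++ q₂, hPj, hq, fun w hwp hwq => ?_⟩
  rcases List.mem_append.mp hwq with h | h
  · have hwi : w ∈ Pi := hst ▸ mem_of_mem_concat h
    rcases hdisj w hwi hwp with h' | h'
    · exact h'
    · exact absurd (h' ▸ h) hxpre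
  · exact absurd hwp (hq₂j w h)

lemma main_lemma (hP1 : IsPath A P1 r x) (hP2 : IsPath A P2 r x)
    (hdisj : ∀ w, w ∈ P1 → w ∈ P2 → w = r ∨ w = x)
    (hQ : IsPath A Q r y) (hxQ : x ∉ Q) (hyx : y ≠ x) :
    ∃ p q, IsPath A p r x ∧ IsPath A q r y ∧ ∀ w, w ∈ p → w ∈ q → w = r := by
  obtain ⟨q₁, z, q₂, hQe, hzS, hq₂⟩ :=
    exists_lastTouch' (fun w => w ∈ P1 ∨ w ∈ P2) Q ⟨r, hQ.start_mem, Or.inl hP1.start_mem⟩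
  have hzQ : z ∈ Q := by rw [hQe]; exact List.mem_append.mpr (Or.inr List.mem_cons_self)
  have hzx : z ≠ x := fun h => hxQ (h ▸ hzQ)
  have hq₂1 : ∀ w ∈ q₂, w ∉ P1 := fun w hw h => hq₂ w hw (Or.inl h)
  have hq₂2 : ∀ w ∈ q₂, w ∉ P2 := fun w hw h => hq₂ w hw (Or.inr h)
  by_cases hzy : z = y
  · subst hzy
    rcases hzS with h | h
    · exact helper1 hP1 hP2 hdisj h hyx
    · exact helper1 hP2 hP1 (fun w h1 h2 => hdisj w h2 h1) h hyx
  · rcases hzS with h | h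
    · exact helper2 hP1 hP2 hdisj (hQe ▸ hQ) h hzx hq₂1 hq₂2 hzy
    · exact helper2 hP2 hP1 (fun w h1 h2 => hdisj w h2 h1) (hQe ▸ hQ) h hzx hq₂2 hq₂1 hzy

end Aux

/-- any two distinct vertices of the diblock of `r` can be reached
by paths from `r` intersecting only in `r`. -/
theorem diblock_pair_paths {V : Type*}
    (A : V → V → Prop) (r : V) (hreach : ∀ v, Reaches A r v)
    (x y : V) (hx : x ∈ diblock A r) (hy : y ∈ diblock A r) (hxy : x ≠ y) :
    ∃ p q, IsPath A p r x ∧ IsPath A q r y ∧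
      ∀ z, z ∈ p → z ∈ q → z = r := by
  by_cases hxr : x = r
  · subst hxr
    obtain ⟨q, hq⟩ := hreach y
    exact ⟨[x], q, isPath_singleton x, hq, fun z hz _ => by simpa using hz⟩
  by_cases hyr : y = r
  · subst hyr
    obtain ⟨p, hp⟩ := hreach x
    exact ⟨p, [y], hp, isPath_singleton y, fun z _ hz => by simpa using hz⟩
  simp only [diblock, Set.mem_union, Set.mem_setOf_eq, Set.mem_singleton_iff] at hx hy
  have hx2 : ∃ P1 P2, IsPath A P1 r x ∧ IsPath A P2 r x ∧
      ∀ w, w ∈ P1 → w ∈ P2 → w = r ∨ w = x := by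
    rcases hx with (hb | hr) | ha
    · obtain ⟨p, q, -, hp, hq, hd⟩ := hb
      exact ⟨p, q, hp, hq, hd⟩
    · exact absurd hr hxr
    · refine ⟨[r, x], [r, x], isPath_pair ha (Ne.symm hxr), isPath_pair ha (Ne.symm hxr),
        fun w hw _ => ?_⟩
      simp at hw
      tauto
  have hy2 : ∃ Q, IsPath A Q r y ∧ x ∉ Q := by
    rcases hy with (hb | hr) | ha
    · obtain ⟨p, q, -, hp, hq, hd⟩ := hb
      by_cases hxp : x ∈ p
      · refine ⟨q, hq, fun hxq => ?_⟩
        rcases hd x hxp hxq with h | h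
        · exact hxr h
        · exact hxy h
      · exact ⟨p, hp, hxp⟩
    · exact absurd hr hyr
    · refine ⟨[r, y], isPath_pair ha (Ne.symm hyr), ?_⟩
      simp only [List.mem_cons, List.mem_singleton, List.not_mem_nil]
      push_neg
      exact ⟨hxr, hxy, trivial⟩
  obtain ⟨P1, P2, h1, h2, hd⟩ := hx2
  obtain ⟨Q, hQ, hxQ⟩ := hy2
  exact main_lemma h1 h2 hd hQ hxQ (Ne.symm hxy)


end CutPaper
end

section
/- Let H be a digraph and r ∈ V(H) such that every vertex of H is reachable from r. Let B_r be the diblock of r in H. Then for every v ∈ V(H) \ B_r there is a unique vertex x ∈ B_r \ {r} such that every directed path from r to v intersects B_r for the last time in x. -/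
namespace CutPaper

variable {V : Type*}

section Aux
open List
variable {A : V → V → Prop}

lemma mem_diblock_root (A : V → V → Prop) (r : V) : r ∈ diblock A r :=
  Or.inl (Or.inr rfl)

lemma mem_diblock_of_bi {r w : V} (h : BiReachable A r w) : w ∈ diblock A r :=
  Or.inl (Or.inl h)

lemma mem_diblock_of_arc {r w : V} (h : A r w) : w ∈ diblock A r := Or.inr h

lemma IsPath.nodup {p : List V} {u v : V} (h : IsPath A p u v) : p.Nodup := h.2.2.2

lemma IsPath.chain {p : List V} {u v : V} (h : IsPath A p u v) : p.Chain' A := h.1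

lemma IsPath.ne_nil {p : List V} {u v : V} (h : IsPath A p u v) : p ≠ [] := by
  rintro rfl
  have := h.2.1
  simp at this

lemma IsPath.eq_cons {p : List V} {u v : V} (h : IsPath A p u v) : ∃ t, p = u :: t := by
  cases p with
  | nil => exact absurd rfl h.ne_nil
  | cons a t =>
      have : a = u := by have := h.2.1; simpa using this
      exact ⟨t, by rw [this]⟩

lemma IsPath.head_mem {p : List V} {u v : V} (h : IsPath A p u v) : u ∈ p := by
  obtain ⟨t, rfl⟩ := h.eq_cons
  exact mem_cons_self

lemma mem_of_getLast?_eq {l : List V} {a : V} (h : l.getLast? = some a) : a ∈ l := by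
  cases l with
  | nil => simp at h
  | cons x t =>
      rw [getLast?_eq_getLast (cons_ne_nil x t)] at h
      have h2 : (x :: t).getLast (cons_ne_nil x t) = a := by
        injection h
      exact h2 ▸ getLast_mem (cons_ne_nil x t)

lemma IsPath.last_mem {p : List V} {u v : V} (h : IsPath A p u v) : v ∈ p :=
  mem_of_getLast?_eq h.2.2.1

lemma head?_append_left {l l' : List V} (h : l ≠ []) : (l ++ l').head? = l.head? := by
  rw [head?_append, head?_eq_head h]
  rfl

lemma getLast?_append_right' {l l' : List V} (h : l' ≠ []) :
    (l ++ l').getLast? = l'.getLast? := by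
  rw [getLast?_append, getLast?_eq_getLast h]
  rfl

lemma isPath_split_left {p₁ p₂ : List V} {z u v : V}
    (h : IsPath A (p₁ ++ z :: p₂) u v) : IsPath A (p₁ ++ [z]) u z := by
  obtain ⟨hc, hh, _, hn⟩ := h
  have hre : p₁ ++ z :: p₂ = (p₁ ++ [z]) ++ p₂ := by simp
  rw [hre] at hc hn hh
  refine ⟨(isChain_append.1 hc).1, ?_, getLast?_concat, (nodup_append.1 hn).1⟩
  rwa [head?_append_left (by simp : p₁ ++ [z] ≠ [])] at hh

lemma isPath_split_right {p₁ p₂ : List V} {z u v : V}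
    (h : IsPath A (p₁ ++ z :: p₂) u v) : IsPath A (z :: p₂) z v := by
  obtain ⟨hc, _, hl, hn⟩ := h
  refine ⟨(isChain_append.1 hc).2.1, rfl, ?_,
    List.Nodup.sublist (sublist_append_right p₁ (z :: p₂)) hn⟩
  rwa [getLast?_append_right' (cons_ne_nil z p₂)] at hl

lemma isPath_glue {p q₂ : List V} {u z v : V}
    (hp : IsPath A p u z) (hq : IsPath A (z :: q₂) z v)
    (hpq : ∀ a ∈ p, a ∈ z :: q₂ → a = z) :
    IsPath A (p ++ q₂) u v := by
  refine ⟨?_, ?_, ?_, ?_⟩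
  · refine IsChain.append hp.1 hq.1.tail ?_
    intro a ha b hb
    have ha' : a = z := by
      rw [hp.2.2.1] at ha
      have := ha; simp at this; exact this.symm
    subst ha'
    cases q₂ with
    | nil => simp at hb
    | cons c t =>
        have hb' : c = b := by simpa using hb
        exact hb' ▸ (isChain_cons_cons.1 hq.1).1
  · rw [head?_append_left hp.ne_nil]
    exact hp.2.1
  · cases q₂ with
    | nil =>
        have hzv : z = v := by have := hq.2.2.1; simpa using this
        rw [append_nil]
        exact hzv ▸ hp.2.2.1
    | cons c t =>
        rw [getLast?_append_right' (cons_ne_nil c t)]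
        have := hq.2.2.1
        rwa [show z :: c :: t = [z] ++ c :: t from rfl,
          getLast?_append_right' (cons_ne_nil c t)] at this
  · refine nodup_append.2 ⟨hp.nodup, (nodup_cons.1 hq.nodup).2, ?_⟩
    intro a ha _ ha' rfl
    have := hpq a ha (mem_cons_of_mem _ ha')
    subst this
    exact (nodup_cons.1 hq.nodup).1 ha'

lemma exists_last_sat (M : V → Prop) :
    ∀ (l : List V), (∃ m ∈ l, M m) →
    ∃ l₁ z l₂, l = l₁ ++ z :: l₂ ∧ M z ∧ ∀ u ∈ l₂, ¬ M u := by
  intro l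
  induction l with
  | nil => rintro ⟨m, hm, _⟩; simp at hm
  | cons a t ih =>
      intro hex
      by_cases ht : ∃ m ∈ t, M m
      · obtain ⟨l₁, z, l₂, he, hz, hl₂⟩ := ih ht
        exact ⟨a :: l₁, z, l₂, by rw [he]; rfl, hz, hl₂⟩
      · obtain ⟨m, hm, hMm⟩ := hex
        have hma : m = a := by
          rcases mem_cons.1 hm with h | h
          · exact h
          · exact absurd ⟨m, h, hMm⟩ ht
        subst hma
        exact ⟨[], m, t, rfl, hMm, fun u hu hMu => ht ⟨u, hu, hMu⟩⟩

lemma exists_first_sat (M : V → Prop) :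
    ∀ (l : List V), (∃ m ∈ l, M m) →
    ∃ l₁ z l₂, l = l₁ ++ z :: l₂ ∧ M z ∧ ∀ u ∈ l₁, ¬ M u := by
  intro l
  induction l with
  | nil => rintro ⟨m, hm, _⟩; simp at hm
  | cons a t ih =>
      intro hex
      by_cases ha : M a
      · exact ⟨[], a, t, rfl, ha, by simp⟩
      · have ht : ∃ m ∈ t, M m := by
          obtain ⟨m, hm, hMm⟩ := hex
          rcases mem_cons.1 hm with h | h
          · exact absurd (h ▸ hMm) ha
          · exact ⟨m, h, hMm⟩
        obtain ⟨l₁, z, l₂, he, hz, hl₁⟩ := ih ht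
        refine ⟨a :: l₁, z, l₂, by rw [he]; rfl, hz, ?_⟩
        intro u hu
        rcases mem_cons.1 hu with h | h
        · exact h ▸ ha
        · exact hl₁ u h

lemma nodup_split_unique :
    ∀ (a : List V) (z : V) (c b d : List V),
    (a ++ z :: b).Nodup → a ++ z :: b = c ++ z :: d → a = c ∧ b = d := by
  intro a
  induction a with
  | nil =>
      intro z c b d hn he
      cases c with
      | nil =>
          simp only [nil_append] at he
          exact ⟨rfl, by injection he⟩
      | cons x c' =>
          exfalso
          simp only [nil_append, cons_append] at he
          have hx : z = x := by injection he
          have hb : b = c' ++ z :: d := by injection he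
          apply (nodup_cons.1 hn).1
          rw [hb]
          exact mem_append.2 (Or.inr mem_cons_self)
  | cons x a' ih =>
      intro z c b d hn he
      cases c with
      | nil =>
          exfalso
          simp only [nil_append, cons_append] at he
          have hx : x = z := by injection he
          have hd : a' ++ z :: b = d := by injection he
          subst hx
          apply (nodup_cons.1 hn).1
          rw [cons_append] at hn
          exact mem_append.2 (Or.inr mem_cons_self)
      | cons y c' =>
          simp only [cons_append] at he hn
          have hxy : x = y := by injection he
          have hrest : a' ++ z :: b = c' ++ z :: d := by injection he
          obtain ⟨h1, h2⟩ := ih z c' b d (nodup_cons.1 hn).2 hrest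
          exact ⟨by rw [hxy, h1], h2⟩

lemma mem_order {c d : V} :
    ∀ (l : List V), c ∈ l → d ∈ l → c ≠ d →
    (∃ a b e, l = a ++ c :: b ++ d :: e) ∨ (∃ a b e, l = a ++ d :: b ++ c :: e) := by
  intro l
  induction l with
  | nil => intro h; simp at h
  | cons h t ih =>
      intro hc hd hne
      by_cases hhc : h = c
      · subst hhc
        have hdt : d ∈ t := by
          rcases mem_cons.1 hd with h' | h'
          · exact absurd h'.symm hne
          · exact h'
        obtain ⟨s, e, hse⟩ := append_of_mem hdt
        exact Or.inl ⟨[], s, e, by rw [hse]; rfl⟩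
      · by_cases hhd : h = d
        · subst hhd
          have hct : c ∈ t := by
            rcases mem_cons.1 hc with h' | h'
            · exact absurd h' hne
            · exact h'
          obtain ⟨s, e, hse⟩ := append_of_mem hct
          exact Or.inr ⟨[], s, e, by rw [hse]; rfl⟩
        · have hct : c ∈ t := by
            rcases mem_cons.1 hc with h' | h'
            · exact absurd h'.symm hhc
            · exact h'
          have hdt : d ∈ t := by
            rcases mem_cons.1 hd with h' | h'
            · exact absurd h'.symm hhd
            · exact h'
          rcases ih hct hdt hne with ⟨a, b, e, hsp⟩ | ⟨a, b, e, hsp⟩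
          · exact Or.inl ⟨h :: a, b, e, by rw [hsp]; rfl⟩
          · exact Or.inr ⟨h :: a, b, e, by rw [hsp]; rfl⟩

lemma pair_of_mem_diblock {r x : V} (hx : x ∈ diblock A r) (hxr : x ≠ r) :
    ∃ p q, IsPath A p r x ∧ IsPath A q r x ∧ IntDisj p q r x := by
  rcases hx with (hb | hr) | ha
  · obtain ⟨p, q, _, hp, hq, hd⟩ := hb
    exact ⟨p, q, hp, hq, hd⟩
  · exact absurd hr hxr
  · have hpath : IsPath A [r, x] r x := by
      refine ⟨?_, rfl, ?_, ?_⟩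
      · exact isChain_pair.2 ha
      · simp
      · simp [Ne.symm hxr]
    refine ⟨[r, x], [r, x], hpath, hpath, ?_⟩
    intro a ha' _
    simpa using ha'

lemma path_eq_pair {p : List V} {r w : V} (hp : IsPath A p r w) (hrw : r ≠ w)
    (hsub : ∀ a ∈ p, a = r ∨ a = w) : p = [r, w] := by
  obtain ⟨t, rfl⟩ := hp.eq_cons
  have hnr : r ∉ t := (nodup_cons.1 hp.nodup).1
  cases t with
  | nil =>
      exfalso
      have := hp.2.2.1
      simp at this
      exact hrw this
  | cons b t' =>
      have hbw : b = w := by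
        rcases hsub b (by simp) with h | h
        · exact absurd (by simp [h]) hnr
        · exact h
      subst hbw
      cases t' with
      | nil => rfl
      | cons c t'' =>
          exfalso
          have hcw : c = b := by
            rcases hsub c (by simp) with h | h
            · exact absurd (by simp [h]) hnr
            · exact h
          have := hp.nodup
          simp [hcw] at this

lemma diblock_of_disj_paths {r w : V} {p q : List V}
    (hp : IsPath A p r w) (hq : IsPath A q r w) (hd : IntDisj p q r w)
    (hrw : r ≠ w) : w ∈ diblock A r := by
  by_cases hpq : p = q
  · subst hpq
    have he := path_eq_pair hp hrw (fun a ha => hd a ha ha)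
    have : A r w := by
      have := hp.1
      rw [he] at this
      exact (isChain_cons_cons.1 this).1
    exact mem_diblock_of_arc this
  · exact mem_diblock_of_bi ⟨p, q, hpq, hp, hq, hd⟩

lemma mem_concat_extend {a z : V} {l l₂ : List V} (h : a ∈ l ++ [z]) :
    a ∈ l ++ z :: l₂ := by
  rcases mem_append.1 h with h | h
  · exact mem_append.2 (Or.inl h)
  · simp at h
    subst h
    exact mem_append.2 (Or.inr mem_cons_self)

lemma fan_core {r x y z : V} {f₁ f₂ g₁ g₂ Gb : List V}
    (hF1 : IsPath A (f₁ ++ z :: f₂) r x) (hyF : y ∉ f₁ ++ z :: f₂)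
    (hGa : IsPath A (g₁ ++ z :: g₂) r y) (hGb : IsPath A Gb r y)
    (hD : ∀ a, a ∈ g₁ ++ z :: g₂ → a ∈ Gb → a = r ∨ a = y)
    (hf₂ : ∀ u ∈ f₂, ¬(u ∈ g₁ ++ z :: g₂ ∨ u ∈ Gb)) :
    ∃ F G, IsPath A F r x ∧ IsPath A G r y ∧ ∀ a ∈ F, a ∈ G → a = r := by
  have hgz : IsPath A (g₁ ++ [z]) r z := isPath_split_left hGa
  have hzf : IsPath A (z :: f₂) z x := isPath_split_right hF1
  have hglue : IsPath A ((g₁ ++ [z]) ++ f₂) r x := by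
    refine isPath_glue hgz hzf ?_
    intro a ha hb
    rcases mem_cons.1 hb with h | h
    · exact h
    · exact absurd (Or.inl (mem_concat_extend ha)) (hf₂ a h)
  refine ⟨_, Gb, hglue, hGb, ?_⟩
  intro a ha hb
  rcases mem_append.1 ha with h | h
  · have haGa : a ∈ g₁ ++ z :: g₂ := mem_concat_extend h
    rcases hD a haGa hb with h' | h'
    · exact h'
    · exfalso
      subst h'
      have hzy : z ≠ a := by
        intro hzy
        exact hyF (hzy ▸ mem_append.2 (Or.inr mem_cons_self))
      have hyg₁ : a ∈ g₁ := by
        rcases mem_append.1 h with h'' | h''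
        · exact h''
        · simp at h''
          exact absurd h''.symm hzy
      have hyg₂ : a ∈ z :: g₂ := by
        have hl := hGa.2.2.1
        rw [getLast?_append_right' (cons_ne_nil z g₂)] at hl
        exact mem_of_getLast?_eq hl
      exact (nodup_append.1 hGa.nodup).2.2 a hyg₁ a hyg₂ rfl
  · exact absurd (Or.inr hb) (hf₂ a h)

lemma fan {r x y : V}
    (hx : x ∈ diblock A r) (hxr : x ≠ r)
    (hy : y ∈ diblock A r) (hyr : y ≠ r) (hxy : x ≠ y) :
    ∃ F G, IsPath A F r x ∧ IsPath A G r y ∧ ∀ a ∈ F, a ∈ G → a = r := by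
  obtain ⟨F₁, F₂, hF₁, hF₂, hFd⟩ := pair_of_mem_diblock hx hxr
  obtain ⟨G₁, G₂, hG₁, hG₂, hGd⟩ := pair_of_mem_diblock hy hyr
  obtain ⟨Fp, hFp, hyFp⟩ : ∃ Fp, IsPath A Fp r x ∧ y ∉ Fp := by
    by_cases h : y ∈ F₁
    · refine ⟨F₂, hF₂, fun h2 => ?_⟩
      rcases hFd y h h2 with h' | h'
      · exact hyr h'
      · exact hxy h'.symm
    · exact ⟨F₁, hF₁, h⟩
  obtain ⟨f₁, z, f₂, hFsplit, hz, hf₂⟩ :=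
    exists_last_sat (fun u => u ∈ G₁ ∨ u ∈ G₂) Fp ⟨r, hFp.head_mem, Or.inl hG₁.head_mem⟩
  rw [hFsplit] at hFp hyFp
  rcases hz with hz | hz
  · obtain ⟨g₁, g₂, hGa⟩ := append_of_mem hz
    rw [hGa] at hG₁
    refine fan_core hFp hyFp hG₁ hG₂ (fun a ha hb => hGd a (by rw [hGa]; exact ha) hb) ?_
    intro u hu h
    refine hf₂ u hu ?_
    rcases h with h | h
    · exact Or.inl (by rw [hGa]; exact h)
    · exact Or.inr h
  · obtain ⟨g₁, g₂, hGa⟩ := append_of_mem hz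
    rw [hGa] at hG₂
    refine fan_core hFp hyFp hG₂ hG₁ (fun a ha hb => hGd a hb (by rw [hGa]; exact ha)) ?_
    intro u hu h
    refine hf₂ u hu ?_
    rcases h with h | h
    · exact Or.inr (by rw [hGa]; exact h)
    · exact Or.inl h

lemma cross_case {r w x y xf yg : V} {S T f₁ f₂ g₁ g₂ : List V} {c d : V}
    (hS : IsPath A S x w) (hT : IsPath A T y w)
    (hST : ∀ u ∈ S, u ∈ T → u = w)
    (hwB : w ∉ diblock A r) (hrw : r ≠ w)
    (hF : IsPath A (f₁ ++ c :: f₂) r xf) (hG : IsPath A (g₁ ++ d :: g₂) r yg)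
    (hFG : ∀ a ∈ f₁ ++ c :: f₂, a ∈ g₁ ++ d :: g₂ → a = r)
    (hf₁ : ∀ u ∈ f₁, ¬(u ∈ S ∨ u ∈ T))
    (hg₁ : ∀ u ∈ g₁, ¬(u ∈ S ∨ u ∈ T))
    (hcS : c ∈ S) (hdT : d ∈ T) : False := by
  obtain ⟨s₁, s₂, hSsp⟩ := append_of_mem hcS
  obtain ⟨t₁, t₂, hTsp⟩ := append_of_mem hdT
  have hs₂S : ∀ u ∈ s₂, u ∈ S := fun u hu => by
    rw [hSsp]; exact mem_append.2 (Or.inr (mem_cons_of_mem _ hu))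
  have ht₂T : ∀ u ∈ t₂, u ∈ T := fun u hu => by
    rw [hTsp]; exact mem_append.2 (Or.inr (mem_cons_of_mem _ hu))
  have hp : IsPath A ((f₁ ++ [c]) ++ s₂) r w := by
    refine isPath_glue (isPath_split_left hF) (isPath_split_right (hSsp ▸ hS)) ?_
    intro a ha hb
    rcases mem_cons.1 hb with h | h
    · exact h
    · rcases mem_append.1 ha with h' | h'
      · exact absurd (Or.inl (hs₂S a h)) (hf₁ a h')
      · simpa using h'
  have hq : IsPath A ((g₁ ++ [d]) ++ t₂) r w := by
    refine isPath_glue (isPath_split_left hG) (isPath_split_right (hTsp ▸ hT)) ?_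
    intro a ha hb
    rcases mem_cons.1 hb with h | h
    · exact h
    · rcases mem_append.1 ha with h' | h'
      · exact absurd (Or.inr (ht₂T a h)) (hg₁ a h')
      · simpa using h'
  have hdisj : IntDisj ((f₁ ++ [c]) ++ s₂) ((g₁ ++ [d]) ++ t₂) r w := by
    intro a ha hb
    rcases mem_append.1 ha with ha1 | ha1 <;> rcases mem_append.1 hb with hb1 | hb1
    · exact Or.inl (hFG a (mem_concat_extend ha1) (mem_concat_extend hb1))
    · rcases mem_append.1 ha1 with h | h
      · exact absurd (Or.inr (ht₂T a hb1)) (hf₁ a h)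
      · simp at h
        subst h
        exact Or.inr (hST a hcS (ht₂T a hb1))
    · rcases mem_append.1 hb1 with h | h
      · exact absurd (Or.inl (hs₂S a ha1)) (hg₁ a h)
      · simp at h
        subst h
        exact Or.inr (hST a (hs₂S a ha1) hdT)
    · exact Or.inr (hST a (hs₂S a ha1) (ht₂T a hb1))
  exact hwB (diblock_of_disj_paths hp hq hdisj hrw)

lemma same_case {r w x xf yg : V} {S f₁ f₂ g₁ g₂ : List V} {c d : V}
    {s₁ s₂ s₃ : List V}
    (hS : IsPath A S x w)
    (hSB : ∀ u ∈ S, u ≠ x → u ∉ diblock A r)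
    (hSsp : S = s₁ ++ c :: (s₂ ++ d :: s₃))
    (hF : IsPath A (f₁ ++ c :: f₂) r xf) (hG : IsPath A (g₁ ++ d :: g₂) r yg)
    (hFG : ∀ a ∈ f₁ ++ c :: f₂, a ∈ g₁ ++ d :: g₂ → a = r)
    (hf₁ : ∀ u ∈ f₁, u ∉ S) (hg₁ : ∀ u ∈ g₁, u ∉ S)
    (hcd : c ≠ d) (hrS : r ∉ S) : False := by
  have hdS : d ∈ S := by
    rw [hSsp]
    exact mem_append.2 (Or.inr (mem_cons_of_mem _ (mem_append.2 (Or.inr mem_cons_self))))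
  have hcS : c ∈ S := by
    rw [hSsp]
    exact mem_append.2 (Or.inr mem_cons_self)
  have hrd : r ≠ d := fun h => hrS (h ▸ hdS)
  have hdx : d ≠ x := by
    intro h
    subst h
    obtain ⟨S', hS'⟩ := hS.eq_cons
    have hdnot : d ∉ S' := by
      have := hS.nodup
      rw [hS'] at this
      exact (nodup_cons.1 this).1
    rw [hS'] at hSsp
    cases s₁ with
    | nil =>
        simp only [nil_append] at hSsp
        have h2 : S' = s₂ ++ d :: s₃ := by injection hSsp
        exact hdnot (by rw [h2]; exact mem_append.2 (Or.inr mem_cons_self))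
    | cons a s₁' =>
        simp only [cons_append] at hSsp
        have h2 : S' = s₁' ++ c :: (s₂ ++ d :: s₃) := by injection hSsp
        exact hdnot (by
          rw [h2]
          exact mem_append.2 (Or.inr (mem_cons_of_mem _
            (mem_append.2 (Or.inr mem_cons_self)))))
  have hdB : d ∉ diblock A r := hSB d hdS hdx
  have hmid : IsPath A (c :: (s₂ ++ [d])) c d := by
    have h1 : IsPath A (c :: (s₂ ++ d :: s₃)) c w := isPath_split_right (hSsp ▸ hS)
    have h2 : IsPath A ((c :: s₂) ++ d :: s₃) c w := by
      rwa [cons_append]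
    have := isPath_split_left h2
    rwa [cons_append] at this
  have hs₂S : ∀ u ∈ s₂ ++ [d], u ∈ S := by
    intro u hu
    rcases mem_append.1 hu with h | h
    · rw [hSsp]
      exact mem_append.2 (Or.inr (mem_cons_of_mem _ (mem_append.2 (Or.inl h))))
    · simp at h
      exact h ▸ hdS
  have hp : IsPath A ((f₁ ++ [c]) ++ (s₂ ++ [d])) r d := by
    refine isPath_glue (isPath_split_left hF) hmid ?_
    intro a ha hb
    rcases mem_cons.1 hb with h | h
    · exact h
    · rcases mem_append.1 ha with h' | h'
      · exact absurd (hs₂S a h) (hf₁ a h')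
      · simpa using h'
  have hq : IsPath A (g₁ ++ [d]) r d := isPath_split_left hG
  have hdisj : IntDisj ((f₁ ++ [c]) ++ (s₂ ++ [d])) (g₁ ++ [d]) r d := by
    intro a ha hb
    rcases mem_append.1 hb with hb1 | hb1
    · rcases mem_append.1 ha with ha1 | ha1
      · exact Or.inl (hFG a (mem_concat_extend ha1)
          (mem_append.2 (Or.inl hb1)))
      · exact absurd (hs₂S a ha1) (hg₁ a hb1)
    · simp at hb1
      exact Or.inr hb1
  exact hdB (diblock_of_disj_paths hp hq hdisj hrd)

lemma main_contra {r x y w : V} {S T : List V}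
    (hx : x ∈ diblock A r) (hxr : x ≠ r)
    (hy : y ∈ diblock A r) (hyr : y ≠ r) (hxy : x ≠ y)
    (hS : IsPath A S x w) (hT : IsPath A T y w)
    (hST : ∀ u ∈ S, u ∈ T → u = w)
    (hSB : ∀ u ∈ S, u ≠ x → u ∉ diblock A r)
    (hTB : ∀ u ∈ T, u ≠ y → u ∉ diblock A r) : False := by
  have hwS := hS.last_mem
  have hwT := hT.last_mem
  have hwx : w ≠ x := by
    intro h
    exact hTB w hwT (by rw [h]; exact hxy) (by rw [h]; exact hx)
  have hwy : w ≠ y := by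
    intro h
    exact hSB w hwS (by rw [h]; exact Ne.symm hxy) (by rw [h]; exact hy)
  have hwB : w ∉ diblock A r := hSB w hwS hwx
  have hrS : r ∉ S := fun h => (hSB r h (Ne.symm hxr)) (mem_diblock_root A r)
  have hrT : r ∉ T := fun h => (hTB r h (Ne.symm hyr)) (mem_diblock_root A r)
  have hrw : r ≠ w := fun h => hwB (h ▸ mem_diblock_root A r)
  obtain ⟨F, G, hF, hG, hFG⟩ := fan hx hxr hy hyr hxy
  obtain ⟨f₁, c, f₂, hFsp, hc, hf₁⟩ :=
    exists_first_sat (fun u => u ∈ S ∨ u ∈ T) F ⟨x, hF.last_mem, Or.inl hS.head_mem⟩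
  obtain ⟨g₁, d, g₂, hGsp, hd, hg₁⟩ :=
    exists_first_sat (fun u => u ∈ S ∨ u ∈ T) G ⟨y, hG.last_mem, Or.inr hT.head_mem⟩
  rw [hFsp] at hF hFG
  rw [hGsp] at hG hFG
  have hcd : c ≠ d := by
    intro h
    have hcF : c ∈ f₁ ++ c :: f₂ := mem_append.2 (Or.inr mem_cons_self)
    have hcG : c ∈ g₁ ++ d :: g₂ := by
      rw [h]
      exact mem_append.2 (Or.inr mem_cons_self)
    have hcr := hFG c hcF hcG
    rcases hc with h' | h'
    · exact hrS (hcr ▸ h')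
    · exact hrT (hcr ▸ h')
  rcases hc with hcS | hcT <;> rcases hd with hdS | hdT
  · rcases mem_order S hcS hdS hcd with ⟨s₁, s₂, s₃, hsp⟩ | ⟨s₁, s₂, s₃, hsp⟩
    · have hsp' : S = s₁ ++ c :: (s₂ ++ d :: s₃) := by rw [hsp]; simp
      exact same_case hS hSB hsp' hF hG hFG
        (fun u hu h => hf₁ u hu (Or.inl h)) (fun u hu h => hg₁ u hu (Or.inl h)) hcd hrS
    · have hsp' : S = s₁ ++ d :: (s₂ ++ c :: s₃) := by rw [hsp]; simp
      exact same_case hS hSB hsp' hG hF (fun a ha hb => hFG a hb ha)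
        (fun u hu h => hg₁ u hu (Or.inl h)) (fun u hu h => hf₁ u hu (Or.inl h))
        (Ne.symm hcd) hrS
  · exact cross_case hS hT hST hwB hrw hF hG hFG hf₁ hg₁ hcS hdT
  · exact cross_case hT hS (fun u h1 h2 => hST u h2 h1) hwB hrw hF hG hFG
      (fun u hu h => hf₁ u hu h.symm) (fun u hu h => hg₁ u hu h.symm) hcT hdS
  · rcases mem_order T hcT hdT hcd with ⟨s₁, s₂, s₃, hsp⟩ | ⟨s₁, s₂, s₃, hsp⟩
    · have hsp' : T = s₁ ++ c :: (s₂ ++ d :: s₃) := by rw [hsp]; simp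
      exact same_case hT hTB hsp' hF hG hFG
        (fun u hu h => hf₁ u hu (Or.inr h)) (fun u hu h => hg₁ u hu (Or.inr h)) hcd hrT
    · have hsp' : T = s₁ ++ d :: (s₂ ++ c :: s₃) := by rw [hsp]; simp
      exact same_case hT hTB hsp' hG hF (fun a ha hb => hFG a hb ha)
        (fun u hu h => hg₁ u hu (Or.inr h)) (fun u hu h => hf₁ u hu (Or.inr h))
        (Ne.symm hcd) hrT

lemma lastTouch_exists {p : List V} {r v : V} (hp : IsPath A p r v) :
    ∃ x, LastTouch (diblock A r) p x := by
  obtain ⟨l₁, z, l₂, hsp, hz, hl₂⟩ :=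
    exists_last_sat (fun u => u ∈ diblock A r) p ⟨r, hp.head_mem, mem_diblock_root A r⟩
  exact ⟨z, l₁, l₂, hsp, hz, hl₂⟩

lemma lastTouch_mem {B : Set V} {p : List V} {x : V} (h : LastTouch B p x) : x ∈ B := by
  obtain ⟨_, _, _, h, _⟩ := h
  exact h

lemma lastTouch_ne_root {p : List V} {r v : V} (hp : IsPath A p r v)
    (hv : v ∉ diblock A r) (h : LastTouch (diblock A r) p r) : False := by
  obtain ⟨p₁, p₂, hsp, _, hp₂⟩ := h
  obtain ⟨t, rfl⟩ := hp.eq_cons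
  have hrt : r ∉ t := (nodup_cons.1 hp.nodup).1
  have hp₁ : p₁ = [] := by
    cases p₁ with
    | nil => rfl
    | cons a p₁' =>
        exfalso
        have h2 : t = p₁' ++ r :: p₂ := by
          rw [cons_append] at hsp
          injection hsp
        exact hrt (by rw [h2]; exact mem_append.2 (Or.inr mem_cons_self))
  subst hp₁
  have ht : t = p₂ := by
    rw [nil_append] at hsp
    injection hsp
  subst ht
  cases t with
  | nil =>
      have hvr : r = v := by have := hp.2.2.1; simpa using this
      exact hv (hvr ▸ mem_diblock_root A r)
  | cons b t' =>
      have hb : A r b := (isChain_cons_cons.1 hp.1).1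
      exact hp₂ b mem_cons_self (mem_diblock_of_arc hb)

lemma lastTouch_unique {B : Set V} {p : List V} {x y : V} (hn : p.Nodup)
    (hx : LastTouch B p x) (hy : LastTouch B p y) : x = y := by
  obtain ⟨p₁, p₂, hpx, hxB, hp₂⟩ := hx
  obtain ⟨q₁, q₂, hqy, hyB, hq₂⟩ := hy
  by_contra hne
  have hyp : y ∈ p₁ ++ x :: p₂ := by
    rw [← hpx, hqy]
    exact mem_append.2 (Or.inr mem_cons_self)
  rcases mem_append.1 hyp with hy1 | hy1
  · obtain ⟨u₁, u₂, hu⟩ := append_of_mem hy1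
    have hre : p = u₁ ++ y :: (u₂ ++ x :: p₂) := by
      rw [hpx, hu]
      simp
    have hnu : (u₁ ++ y :: (u₂ ++ x :: p₂)).Nodup := hre ▸ hn
    have heq : u₁ ++ y :: (u₂ ++ x :: p₂) = q₁ ++ y :: q₂ := hre.symm.trans hqy
    obtain ⟨-, h2⟩ := nodup_split_unique u₁ y q₁ (u₂ ++ x :: p₂) q₂ hnu heq
    have hxq : x ∈ q₂ := by
      rw [← h2]
      exact mem_append.2 (Or.inr mem_cons_self)
    exact hq₂ x hxq hxB
  · rcases mem_cons.1 hy1 with h | h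
    · exact hne h.symm
    · exact hp₂ y h hyB

lemma touch_eq {r v : V} (hv : v ∉ diblock A r) {p q : List V} {x y : V}
    (hp : IsPath A p r v) (hq : IsPath A q r v)
    (hx : LastTouch (diblock A r) p x) (hy : LastTouch (diblock A r) q y) : x = y := by
  by_contra hxy
  obtain ⟨a₁, a₂, hpa, hxB, ha₂⟩ := hx
  obtain ⟨b₁, b₂, hqb, hyB, hb₂⟩ := hy
  have hxr : x ≠ r := by
    intro h
    have hLT : LastTouch (diblock A r) p x := ⟨a₁, a₂, hpa, hxB, ha₂⟩
    rw [h] at hLT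
    exact lastTouch_ne_root hp hv hLT
  have hyr : y ≠ r := by
    intro h
    have hLT : LastTouch (diblock A r) q y := ⟨b₁, b₂, hqb, hyB, hb₂⟩
    rw [h] at hLT
    exact lastTouch_ne_root hq hv hLT
  have hxa : IsPath A (x :: a₂) x v := isPath_split_right (hpa ▸ hp)
  have hyb : IsPath A (y :: b₂) y v := isPath_split_right (hqb ▸ hq)
  have hvx : v ≠ x := fun h => hv (h ▸ hxB)
  have hva : v ∈ a₂ := by
    rcases mem_cons.1 hxa.last_mem with h | h
    · exact absurd h hvx
    · exact h
  obtain ⟨u₁, w, u₂, hasp, hwT, hu₁⟩ :=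
    exists_first_sat (fun u => u ∈ y :: b₂) a₂ ⟨v, hva, hyb.last_mem⟩
  have hwa : w ∈ a₂ := by
    rw [hasp]
    exact mem_append.2 (Or.inr mem_cons_self)
  have hwB : w ∉ diblock A r := ha₂ w hwa
  have hwy : w ≠ y := fun h => hwB (h ▸ hyB)
  have hwb : w ∈ b₂ := by
    rcases mem_cons.1 hwT with h | h
    · exact absurd h hwy
    · exact h
  obtain ⟨t₁, t₂, hbsp⟩ := append_of_mem hwb
  have hb₂n : b₂.Nodup := (nodup_cons.1 hyb.nodup).2
  have hSpath : IsPath A ((x :: u₁) ++ [w]) x w := by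
    have h1 : IsPath A ((x :: u₁) ++ w :: u₂) x v := by
      rw [cons_append]
      rw [hasp] at hxa
      exact hxa
    exact isPath_split_left h1
  have hTpath : IsPath A ((y :: t₁) ++ [w]) y w := by
    have h1 : IsPath A ((y :: t₁) ++ w :: t₂) y v := by
      rw [cons_append]
      rw [hbsp] at hyb
      exact hyb
    exact isPath_split_left h1
  have ht₁b : ∀ u ∈ t₁, u ∈ b₂ := fun u hu => by
    rw [hbsp]
    exact mem_append.2 (Or.inl hu)
  have hu₁a : ∀ u ∈ u₁, u ∈ a₂ := fun u hu => by
    rw [hasp]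
    exact mem_append.2 (Or.inl hu)
  refine main_contra hxB hxr hyB hyr hxy hSpath hTpath ?_ ?_ ?_
  · intro u hu1 hu2
    rcases mem_append.1 hu2 with h2 | h2
    · rcases mem_cons.1 h2 with h2' | h2'
      · exfalso
        subst h2'
        rcases mem_append.1 hu1 with h1 | h1
        · rcases mem_cons.1 h1 with h1' | h1'
          · exact hxy h1'.symm
          · exact hu₁ _ h1' mem_cons_self
        · simp at h1
          exact hwy h1.symm
      · exfalso
        rcases mem_append.1 hu1 with h1 | h1
        · rcases mem_cons.1 h1 with h1' | h1'
          · subst h1'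
            exact hb₂ _ (ht₁b _ h2') hxB
          · exact hu₁ u h1' (mem_cons_of_mem _ (ht₁b u h2'))
        · simp at h1
          have : (t₁ ++ w :: t₂).Nodup := hbsp ▸ hb₂n
          exact (nodup_append.1 this).2.2 w (h1 ▸ h2') w mem_cons_self rfl
    · simpa using h2
  · intro u hu hux
    rcases mem_append.1 hu with h | h
    · rcases mem_cons.1 h with h' | h'
      · exact absurd h' hux
      · exact ha₂ u (hu₁a u h')
    · simp at h
      exact h ▸ hwB
  · intro u hu huy
    rcases mem_append.1 hu with h | h
    · rcases mem_cons.1 h with h' | h'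
      · exact absurd h' huy
      · exact hb₂ u (ht₁b u h')
    · simp at h
      exact h ▸ hwB

end Aux

/-- vertices outside the diblock of `r` partition according to a
unique cut vertex of the diblock: every path from `r` to `v` meets the diblock
for the last time in the same vertex `x ≠ r`. -/
theorem diblock_partition {V : Type*}
    (A : V → V → Prop) (r : V) (hreach : ∀ v, Reaches A r v)
    (v : V) (hv : v ∉ diblock A r) :
    ∃! x, x ∈ diblock A r \ {r} ∧
      ∀ p, IsPath A p r v → LastTouch (diblock A r) p x := by
  obtain ⟨P, hP⟩ := hreach v
  obtain ⟨x₀, hx₀⟩ := lastTouch_exists hP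
  have hx₀B : x₀ ∈ diblock A r := lastTouch_mem hx₀
  have hx₀r : x₀ ≠ r := by
    intro h
    rw [h] at hx₀
    exact lastTouch_ne_root hP hv hx₀
  refine ⟨x₀, ⟨⟨hx₀B, hx₀r⟩, ?_⟩, ?_⟩
  · intro p hp
    obtain ⟨y, hy⟩ := lastTouch_exists hp
    have hyx : y = x₀ := touch_eq hv hp hP hy hx₀
    exact hyx ▸ hy
  · rintro x' ⟨-, hall⟩
    exact lastTouch_unique hP.nodup (hall P hP) hx₀

end CutPaper
end

section
/- Let (T̂, {B_x}) be the r-rooted cut decomposition of a digraph H. For distinct nodes x, y ∈ T̂: if x is the parent of y in T̂ then B_x ∩ B_y = {y}; in every other situation B_x ∩ B_y = ∅. -/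
namespace CutPaper

variable {V : Type*}

/-! ### Auxiliary lemmas -/


lemma isPath_rtg {A : V → V → Prop} :
    ∀ {p : List V} {u v : V}, IsPath A p u v → Relation.ReflTransGen A u v
  | [], u, v, h => by simp [IsPath] at h
  | [a], u, v, h => by
      obtain ⟨-, h1, h2, -⟩ := h
      simp only [List.head?_cons, Option.some.injEq] at h1
      simp only [List.getLast?_singleton, Option.some.injEq] at h2
      subst h1; subst h2; rfl
  | a :: b :: t, u, v, h => by
      obtain ⟨hc, h1, h2, hn⟩ := h
      simp only [List.head?_cons, Option.some.injEq] at h1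
      subst h1
      unfold List.Chain' at hc; rw [List.isChain_cons_cons] at hc
      have hrest : IsPath A (b :: t) b v :=
        ⟨hc.2, rfl, by simpa using h2, hn.of_cons⟩
      exact Relation.ReflTransGen.head hc.1 (isPath_rtg hrest)

lemma rtg_reaches {A : V → V → Prop} {u v : V}
    (h : Relation.ReflTransGen A u v) : Reaches A u v := by
  induction h with
  | refl => exact ⟨[u], by simp [IsPath, List.Chain']⟩
  | @tail b c hub hbc ih =>
    obtain ⟨p, hch, hh, hl, hn⟩ := ih
    by_cases hc : c ∈ p
    · obtain ⟨p₁, p₂, rfl⟩ := List.append_of_mem hc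
      refine ⟨p₁ ++ [c], ?_, ?_, List.getLast?_concat, ?_⟩
      · exact hch.prefix ⟨p₂, by simp⟩
      · rcases List.eq_nil_or_concat' p₁ with rfl | ⟨l, a, rfl⟩
        · simpa using hh
        · rw [List.head?_append_of_ne_nil _ (by simp)]
          rw [List.head?_append_of_ne_nil _ (by simp)] at hh
          exact hh
      · have hpre : (p₁ ++ [c]) <+: (p₁ ++ c :: p₂) := ⟨p₂, by simp⟩
        exact hn.sublist hpre.sublist
    · have hpne : p ≠ [] := by rintro rfl; simp at hh
      refine ⟨p ++ [c], ?_, ?_, List.getLast?_concat, ?_⟩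
      · unfold List.Chain'; rw [List.isChain_append]
        refine ⟨hch, List.isChain_singleton _, ?_⟩
        intro x hx y hy
        simp only [List.head?_cons, Option.mem_def, Option.some.injEq] at hy
        rw [Option.mem_def, hl] at hx
        cases hx; cases hy; exact hbc
      · rw [List.head?_append_of_ne_nil _ hpne]; exact hh
      · rw [List.nodup_append]
        exact ⟨hn, List.nodup_singleton _, fun a ha b hb hab => hc (by rw [List.mem_singleton] at hb; subst hb; subst hab; exact ha)⟩

lemma lastTouch_unique_s7 {B : Set V} {p : List V} {w1 w2 : V}
    (h1 : LastTouch B p w1) (h2 : LastTouch B p w2) : w1 = w2 := by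
  obtain ⟨p₁, p₂, hp, hw1, hP⟩ := h1
  obtain ⟨q₁, q₂, hq, hw2, hQ⟩ := h2
  by_contra hne
  have s1 : (w1 :: p₂) <:+ p := ⟨p₁, hp.symm⟩
  have s2 : (w2 :: q₂) <:+ p := ⟨q₁, hq.symm⟩
  rcases le_total (w1 :: p₂).length (w2 :: q₂).length with hle | hle
  · have hsuf := List.suffix_of_suffix_length_le s1 s2 hle
    have hmem : w1 ∈ w2 :: q₂ := hsuf.mem List.mem_cons_self
    rcases List.mem_cons.mp hmem with h | h
    · exact hne h
    · exact hQ _ h hw1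
  · have hsuf := List.suffix_of_suffix_length_le s2 s1 hle
    have hmem : w2 ∈ w1 :: p₂ := hsuf.mem List.mem_cons_self
    rcases List.mem_cons.mp hmem with h | h
    · exact hne h.symm
    · exact hP _ h hw2

section Decomp

variable {A : V → V → Prop} {r : V} {d : PreDecomp V}

lemma mem_B_self (hD : IsCutDecomp A r d) {x : V} (hx : x ∈ d.N) : x ∈ d.B x := by
  rw [hD.diblock_eq x hx]
  exact Or.inl (Or.inr rfl)

lemma B_subset_Bstar {x : V} (hx : x ∈ d.N) : d.B x ⊆ Bstar d r x :=
  fun v hv => ⟨x, hx, Relation.ReflTransGen.refl, hv⟩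

lemma Bstar_mono {a b : V} (hab : Anc d r a b) : Bstar d r b ⊆ Bstar d r a := by
  rintro v ⟨c, hc, hbc, hvc⟩
  exact ⟨c, hc, hbc.trans hab, hvc⟩

lemma child_anc {x c : V} (hc : IsChild d r c x) : Anc d r x c :=
  Relation.ReflTransGen.single hc

lemma not_mem_Bstar_child (hD : IsCutDecomp A r d) {x c : V} (hx : x ∈ d.N)
    (hc : IsChild d r c x) : x ∉ Bstar d r c := by
  rw [hD.child_part x hx c hc]
  rw [Set.mem_insert_iff]
  rintro (rfl | hmem)
  · exact ((hD.child_iff x hx x).mp hc).2.1 rfl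
  · exact hmem.2.1 (mem_B_self hD hx)

lemma anc_not_mem (hD : IsCutDecomp A r d) {a b : V} (ha : a ∈ d.N)
    (hab : Anc d r a b) (hne : a ≠ b) : a ∉ Bstar d r b := by
  rcases hab.cases_tail with heq | ⟨c, hbc, hstep⟩
  · exact absurd heq hne
  · intro hmem
    exact not_mem_Bstar_child hD ha hstep (Bstar_mono hbc hmem)

lemma rtg_asub_mono {S S' : Set V} (hS : S ⊆ S') {u v : V}
    (h : Relation.ReflTransGen (Asub A S) u v) :
    Relation.ReflTransGen (Asub A S') u v :=
  Relation.ReflTransGen.mono (r := Asub A S) (p := Asub A S') (fun a b hab => ⟨hab.1, hS hab.2.1, hS hab.2.2⟩) u v h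

lemma mem_B_rtg (hD : IsCutDecomp A r d) {c v : V} (hc : c ∈ d.N) (hv : v ∈ d.B c) :
    Relation.ReflTransGen (Asub A (Bstar d r c)) c v := by
  rw [hD.diblock_eq c hc] at hv
  rcases hv with (hb | heq) | he
  · obtain ⟨p, q, -, hp, -, -⟩ := hb
    exact isPath_rtg hp
  · rw [Set.mem_singleton_iff] at heq; subst heq; rfl
  · exact Relation.ReflTransGen.single he

lemma reach_in_Bstar (hD : IsCutDecomp A r d) {z v : V} (hz : z ∈ d.N)
    (hv : v ∈ Bstar d r z) :
    Relation.ReflTransGen (Asub A (Bstar d r z)) z v := by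
  obtain ⟨c, hc, hanc, hvc⟩ := hv
  unfold Anc at hanc
  induction hanc with
  | refl => exact mem_B_rtg hD hc hvc
  | @tail b z' hcb hstep ih =>
    have hchild : IsChild d r b z' := hstep
    have hbB : b ∈ d.B z' := ((hD.child_iff z' hz b).mp hchild).1
    exact (mem_B_rtg hD hz hbB).trans
      (rtg_asub_mono (Bstar_mono (child_anc hchild)) (ih hstep.1))

lemma lca (hD : IsCutDecomp A r d) {x y a : V} (hnxy : ¬ Anc d r x y)
    (hnyx : ¬ Anc d r y x) (hax : Anc d r a x) :
    Anc d r a y →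
    ∃ z w1 w2, z ∈ d.N ∧ IsChild d r w1 z ∧ IsChild d r w2 z ∧ w1 ≠ w2 ∧
      Anc d r w1 x ∧ Anc d r w2 y := by
  unfold Anc at hax
  induction hax with
  | refl => exact fun hay => absurd hay hnxy
  | @tail b a' h1 hstep ih =>
    intro hay
    have hax' : Anc d r a' x := Relation.ReflTransGen.tail h1 hstep
    have hane : a' ≠ y := by rintro rfl; exact hnyx hax'
    rcases hay.cases_tail with heq | ⟨c', hyc', hstep'⟩
    · exact absurd heq hane
    · by_cases hbc : b = c'
      · subst hbc
        exact ih hyc'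
      · have haN : a' ∈ d.N := hstep.2.2 ▸ hD.parent_mem b hstep.1 hstep.2.1
        exact ⟨a', b, c', haN, hstep, hstep', hbc, h1, hyc'⟩

end Decomp

/-- distinct diblocks of a cut decomposition intersect exactly in
`{y}` when `x` is the parent of `y`, and are disjoint otherwise. -/
theorem cutDecomp_diblock_intersections {V : Type*}
    (A : V → V → Prop) (r : V) (hreach : ∀ v, Reaches A r v)
    (d : PreDecomp V) (h : IsCutDecomp A r d)
    (x y : V) (hx : x ∈ d.N) (hy : y ∈ d.N) (hxy : x ≠ y) :
    (IsChild d r y x → d.B x ∩ d.B y = {y}) ∧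
    (¬ IsChild d r y x → ¬ IsChild d r x y → d.B x ∩ d.B y = ∅) := by
  constructor
  · intro hchild
    apply Set.Subset.antisymm
    · rintro v ⟨hvx, hvy⟩
      have hvB : v ∈ Bstar d r y := B_subset_Bstar hy hvy
      rw [h.child_part x hx y hchild, Set.mem_insert_iff] at hvB
      rcases hvB with rfl | hvp
      · rfl
      · exact absurd hvx hvp.2.1
    · rintro v hv
      rw [Set.mem_singleton_iff] at hv
      rw [hv]
      exact ⟨((h.child_iff x hx y).mp hchild).1, mem_B_self h hy⟩
  · intro hnyx hnxy
    rw [Set.eq_empty_iff_forall_notMem]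
    rintro v ⟨hvx, hvy⟩
    by_cases hax : Anc d r x y
    · rcases hax.cases_tail with heq | ⟨w, hwy, hstep⟩
      · exact hxy heq
      · have hwchild : IsChild d r w x := hstep
        have hwne : w ≠ y := by rintro rfl; exact hnyx hwchild
        have hvB : v ∈ Bstar d r w := Bstar_mono hwy (B_subset_Bstar hy hvy)
        rw [h.child_part x hx w hwchild, Set.mem_insert_iff] at hvB
        rcases hvB with rfl | hvp
        · exact anc_not_mem h hstep.1 hwy hwne (B_subset_Bstar hy hvy)
        · exact hvp.2.1 hvx
    · by_cases hay : Anc d r y x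
      · rcases hay.cases_tail with heq | ⟨w, hwx, hstep⟩
        · exact hxy heq.symm
        · have hwchild : IsChild d r w y := hstep
          have hwne : w ≠ x := by rintro rfl; exact hnxy hwchild
          have hvB : v ∈ Bstar d r w := Bstar_mono hwx (B_subset_Bstar hx hvx)
          rw [h.child_part y hy w hwchild, Set.mem_insert_iff] at hvB
          rcases hvB with rfl | hvp
          · exact anc_not_mem h hstep.1 hwx hwne (B_subset_Bstar hx hvx)
          · exact hvp.2.1 hvy
      · obtain ⟨z, w1, w2, hz, hc1, hc2, hw12, hw1x, hw2y⟩ :=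
          lca h hax hay (h.tree x hx) (h.tree y hy)
        have hv1 : v ∈ Bstar d r w1 := Bstar_mono hw1x (B_subset_Bstar hx hvx)
        have hv2 : v ∈ Bstar d r w2 := Bstar_mono hw2y (B_subset_Bstar hy hvy)
        rw [h.child_part z hz w1 hc1, Set.mem_insert_iff] at hv1
        rw [h.child_part z hz w2 hc2, Set.mem_insert_iff] at hv2
        have hw1B : w1 ∈ d.B z := ((h.child_iff z hz w1).mp hc1).1
        have hw2B : w2 ∈ d.B z := ((h.child_iff z hz w2).mp hc2).1
        rcases hv1 with heq1 | hp1
        · rcases hv2 with heq2 | hp2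
          · exact hw12 (heq1 ▸ heq2)
          · exact hp2.2.1 (heq1 ▸ hw1B)
        · rcases hv2 with heq2 | hp2
          · exact hp1.2.1 (heq2 ▸ hw2B)
          · obtain ⟨p, hp⟩ := rtg_reaches (reach_in_Bstar h hz hp1.1)
            exact hw12 (lastTouch_unique_s7 (hp1.2.2 p hp) (hp2.2.2 p hp))


end CutPaper
end
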